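/- arXiv:1708.08540 — 2 statements merged into one kernel-verified Lean document; each statement's English description precedes it below -/
import Mathlib

section
/- Let M^m be a complete biharmonic hypersurface of constant scalar curvature in a non-positively curved Einstein manifold N^{m+1} with Ric^N = λh. Then the pointwise inequality Δ|∇H|² ≥ 2((5/4)m²H² + |A|²)|∇H|² ≥ (1/8)m(5m+4)|∇H²|² ≥ 0 holds. -/
noncomputable section

open scoped RealInnerProductSpace BigOperators

/-- Abstract data encoding an isometrically immersed (connected, orientable) hypersurface
`M^m ↪ N^{m+1}`: `V` is a model for the tangent spaces of `M` (an `m`-dimensional real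
inner product space), `A` is the shape operator field, `H` the mean curvature function
(so `trace A = m H`), together with the gradient, Laplace and Hessian operators and the
Ricci curvature of the induced metric, subject to the standard rules of Riemannian
calculus (connectedness of `M` is encoded by `const_of_grad`, and the Bochner formula
holds).  `mixed p X Y` denotes the ambient curvature term `R^N(X, ξ, Y, ξ)` at `p`,
where `ξ` is the chosen unit normal. -/
structure HypersurfaceData (m : ℕ) (M : Type) (V : Type)
    [NormedAddCommGroup V] [InnerProductSpace ℝ V] [FiniteDimensional ℝ V] : Type where
  dimV : Module.finrank ℝ V = m
  /-- the shape operator -/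
  A : M → V →ₗ[ℝ] V
  A_symm : ∀ p (x y : V), ⟪A p x, y⟫ = ⟪x, A p y⟫
  /-- the mean curvature function -/
  H : M → ℝ
  trace_A : ∀ p, LinearMap.trace ℝ V (A p) = m * H p
  /-- the gradient operator of `(M, g)` -/
  grad : (M → ℝ) → M → V
  /-- the Laplace operator of `(M, g)` -/
  lap : (M → ℝ) → M → ℝ
  /-- `hess2 f` is `|∇df|²`, the squared norm of the Hessian of `f` -/
  hess2 : (M → ℝ) → M → ℝ
  /-- the Ricci curvature of `(M, g)` -/
  ricci : M → V → V → ℝ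
  /-- `mixed p X Y = R^N(X, ξ, Y, ξ)` -/
  mixed : M → V → V → ℝ
  grad_add : ∀ f g : M → ℝ, grad (fun p => f p + g p) = fun p => grad f p + grad g p
  grad_mul : ∀ f g : M → ℝ,
    grad (fun p => f p * g p) = fun p => f p • grad g p + g p • grad f p
  grad_const : ∀ c : ℝ, grad (fun _ => c) = fun _ => 0
  lap_const : ∀ c : ℝ, lap (fun _ => c) = fun _ => 0
  const_of_grad : ∀ f : M → ℝ, (∀ p, grad f p = 0) → ∀ p q, f p = f q
  hess2_nonneg : ∀ f p, 0 ≤ hess2 f p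
  hess2_bound : ∀ f p, (lap f p) ^ 2 ≤ m * hess2 f p
  bochner : ∀ (f : M → ℝ) (p : M),
    lap (fun q => ‖grad f q‖ ^ 2) p
      = 2 * (hess2 f p + ricci p (grad f p) (grad f p) + ⟪grad f p, grad (lap f) p⟫)

namespace HypersurfaceData

variable {m : ℕ} {M V : Type} [NormedAddCommGroup V] [InnerProductSpace ℝ V]
  [FiniteDimensional ℝ V] (D : HypersurfaceData m M V)

/-- `|A|²`, the squared norm of the shape operator. -/
def normA2 (p : M) : ℝ := LinearMap.trace ℝ V (D.A p ∘ₗ D.A p)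

/-- The scalar curvature of `M` (trace of the Ricci curvature). -/
def scal (p : M) : ℝ :=
  ∑ i, D.ricci p (stdOrthonormalBasis ℝ V i) (stdOrthonormalBasis ℝ V i)

/-- `M` has constant scalar curvature. -/
def ConstScal : Prop := ∀ p q, D.scal p = D.scal q

/-- `M` is minimal, i.e. `H ≡ 0`. -/
def Minimal : Prop := ∀ p, D.H p = 0

/-- The biharmonic equations for a hypersurface of an Einstein manifold with
`Ric^N = lam·h` :  `ΔH = H(|A|² - lam)` and `A(∇H) + (m/2) H ∇H = 0`. -/
def IsBiharmonic (lam : ℝ) : Prop :=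
  (∀ p, D.lap D.H p = D.H p * (D.normA2 p - lam)) ∧
  (∀ p, D.A p (D.grad D.H p) + ((m : ℝ) / 2 * D.H p) • D.grad D.H p = 0)

/-- The contracted Gauss equation for a hypersurface of a space form of constant
sectional curvature `C`, where `Ric^N(X,Y) = m C ⟨X,Y⟩` and `R^N(X,ξ,Y,ξ) = C ⟨X,Y⟩`
for tangent `X, Y`. -/
def SpaceFormGauss (C : ℝ) : Prop :=
  ∀ p (X Y : V), (m : ℝ) * C * ⟪X, Y⟫
    = D.ricci p X Y + ⟪D.A p X, D.A p Y⟫ - m * D.H p * ⟪D.A p X, Y⟫ + C * ⟪X, Y⟫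

/-- The contracted Gauss equation for a hypersurface of an Einstein manifold with
`Ric^N = lam·h`. -/
def EinsteinAmbientGauss (lam : ℝ) : Prop :=
  ∀ p (X Y : V), lam * ⟪X, Y⟫
    = D.ricci p X Y + ⟪D.A p X, D.A p Y⟫ - m * D.H p * ⟪D.A p X, Y⟫ + D.mixed p X Y

/-- `Ric^N(ξ,ξ) = lam`: the trace over the tangent directions of `R^N(·,ξ,·,ξ)`
equals the ambient Ricci curvature in the normal direction. -/
def MixedTrace (lam : ℝ) : Prop :=
  ∀ p, ∑ i, D.mixed p (stdOrthonormalBasis ℝ V i) (stdOrthonormalBasis ℝ V i) = lam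

end HypersurfaceData


lemma trace_onb {V : Type} [NormedAddCommGroup V] [InnerProductSpace ℝ V]
    [FiniteDimensional ℝ V] (T : V →ₗ[ℝ] V) :
    LinearMap.trace ℝ V T
      = ∑ i, ⟪stdOrthonormalBasis ℝ V i, T (stdOrthonormalBasis ℝ V i)⟫ := by
  rw [LinearMap.trace_eq_matrix_trace ℝ (stdOrthonormalBasis ℝ V).toBasis T, Matrix.trace]
  simp [Matrix.diag, LinearMap.toMatrix_apply, OrthonormalBasis.coe_toBasis,
    OrthonormalBasis.repr_apply_apply]

namespace HypersurfaceData

variable {m : ℕ} {M V : Type} [NormedAddCommGroup V] [InnerProductSpace ℝ V]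
  [FiniteDimensional ℝ V] (D : HypersurfaceData m M V)

/-- `|A|²` as a sum of squared norms over an orthonormal basis. -/
lemma normA2_eq (p : M) :
    D.normA2 p = ∑ i, ‖D.A p (stdOrthonormalBasis ℝ V i)‖ ^ 2 := by
  rw [normA2, trace_onb]
  refine Finset.sum_congr rfl fun i _ => ?_
  rw [LinearMap.comp_apply, ← D.A_symm, real_inner_self_eq_norm_sq]

/-- Newton's inequality `|A|² ≥ m H²`. -/
lemma newton (hm : 0 < m) (p : M) : (m : ℝ) * (D.H p) ^ 2 ≤ D.normA2 p := by
  set b := stdOrthonormalBasis ℝ V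
  have hd : Module.finrank ℝ V = m := D.dimV
  have htr : ∑ i, ⟪b i, D.A p (b i)⟫ = (m : ℝ) * D.H p := by
    rw [← trace_onb, D.trace_A]
  have hsq : (∑ i, ⟪b i, D.A p (b i)⟫) ^ 2
      ≤ (m : ℝ) * ∑ i, ⟪b i, D.A p (b i)⟫ ^ 2 := by
    have := sq_sum_le_card_mul_sum_sq (s := (Finset.univ : Finset (Fin (Module.finrank ℝ V))))
      (f := fun i => ⟪b i, D.A p (b i)⟫)
    simpa [hd] using this
  have hterm : ∀ i, ⟪b i, D.A p (b i)⟫ ^ 2 ≤ ‖D.A p (b i)‖ ^ 2 := by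
    intro i
    have h1 : ‖b i‖ = 1 := (b).orthonormal.1 i
    have := real_inner_mul_inner_self_le (b i) (D.A p (b i))
    rw [real_inner_self_eq_norm_sq, real_inner_self_eq_norm_sq, h1] at this
    calc ⟪b i, D.A p (b i)⟫ ^ 2 = ⟪b i, D.A p (b i)⟫ * ⟪b i, D.A p (b i)⟫ := sq _
      _ ≤ 1 ^ 2 * ‖D.A p (b i)‖ ^ 2 := this
      _ = ‖D.A p (b i)‖ ^ 2 := by ring
  have hsum : ∑ i, ⟪b i, D.A p (b i)⟫ ^ 2 ≤ D.normA2 p := by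
    rw [D.normA2_eq p]
    exact Finset.sum_le_sum fun i _ => hterm i
  have hm' : (0 : ℝ) < m := by exact_mod_cast hm
  have : ((m : ℝ) * D.H p) ^ 2 ≤ (m : ℝ) * D.normA2 p := by
    rw [← htr]
    exact hsq.trans (mul_le_mul_of_nonneg_left hsum hm'.le)
  nlinarith [this]

/-- The traced Gauss equation: `|A|² - m²H²` differs from `-scal` by a constant. -/
lemma normA2_sub (lam : ℝ) (hgauss : D.EinsteinAmbientGauss lam)
    (hmix : D.MixedTrace lam) (p : M) :
    D.normA2 p = (m : ℝ) ^ 2 * (D.H p) ^ 2 + (lam * ((m : ℝ) - 1) - D.scal p) := by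
  set b := stdOrthonormalBasis ℝ V
  have hd : Module.finrank ℝ V = m := D.dimV
  have hsum : ∑ i, lam * ⟪b i, b i⟫
      = ∑ i, (D.ricci p (b i) (b i) + ⟪D.A p (b i), D.A p (b i)⟫
          - m * D.H p * ⟪D.A p (b i), b i⟫ + D.mixed p (b i) (b i)) :=
    Finset.sum_congr rfl fun i _ => hgauss p (b i) (b i)
  have hone : ∀ i, ⟪b i, b i⟫ = (1 : ℝ) := by
    intro i
    rw [real_inner_self_eq_norm_sq, (b).orthonormal.1 i]; norm_num
  have hL : ∑ i, lam * ⟪b i, b i⟫ = lam * m := by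
    simp [hone, hd, Finset.sum_const, mul_comm]
  have hA2 : ∑ i, ⟪D.A p (b i), D.A p (b i)⟫ = D.normA2 p := by
    rw [D.normA2_eq p]
    exact Finset.sum_congr rfl fun i _ => real_inner_self_eq_norm_sq _
  have hAt : ∑ i, ⟪D.A p (b i), b i⟫ = (m : ℝ) * D.H p := by
    rw [← D.trace_A p, trace_onb]
    exact Finset.sum_congr rfl fun i _ => D.A_symm p _ _
  rw [hL, Finset.sum_add_distrib, Finset.sum_sub_distrib, Finset.sum_add_distrib,
    hA2, hmix p, ← Finset.mul_sum, hAt] at hsum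
  have hscal : ∑ i, D.ricci p (b i) (b i) = D.scal p := rfl
  rw [hscal] at hsum
  nlinarith [hsum]

/-- Gradient of `a f³ + b f`. -/
lemma grad_cubic (f : M → ℝ) (a b : ℝ) (p : M) :
    D.grad (fun q => a * (f q * (f q * f q)) + b * f q) p
      = (3 * a * (f p) ^ 2 + b) • D.grad f p := by
  have hconst : ∀ (c : ℝ) (g : M → ℝ),
      D.grad (fun q => c * g q) = fun p => c • D.grad g p := by
    intro c g
    have := D.grad_mul (fun _ => c) g
    rw [this]
    funext q
    rw [D.grad_const c]
    simp
  have h2 : D.grad (fun q => f q * f q) = fun p => (2 * f p) • D.grad f p := by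
    rw [D.grad_mul f f]
    funext q
    simp only [two_mul, add_smul]
  have h3 : D.grad (fun q => f q * (f q * f q))
      = fun p => (3 * (f p) ^ 2) • D.grad f p := by
    rw [D.grad_mul f (fun q => f q * f q), h2]
    funext q
    simp only [smul_smul]
    module
  rw [D.grad_add (fun q => a * (f q * (f q * f q))) (fun q => b * f q),
    hconst a (fun q => f q * (f q * f q)), hconst b f, h3]
  simp only [smul_smul]
  module

end HypersurfaceData

/-- **The pointwise inequality chain for complete biharmonic hypersurfaces of constant
scalar curvature in a non-positively curved Einstein manifold.**  Let `M^m` be a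
complete biharmonic hypersurface of constant scalar curvature in an Einstein manifold
`N^{m+1}` with `Ric^N = λ h` and non-positive sectional curvature (so that
`R^N(X,ξ,X,ξ) ≤ 0`, encoded by `hnonpos`).  Then at every point
`Δ|∇H|² ≥ 2((5/4)m²H² + |A|²)|∇H|² ≥ (1/8)m(5m+4)|∇H²|² ≥ 0`. -/
theorem pointwise_inequality_biharmonic_nonpositive_einstein {M V : Type}
    [NormedAddCommGroup V] [InnerProductSpace ℝ V] [FiniteDimensional ℝ V]
    {m : ℕ} (hm : 0 < m) (D : HypersurfaceData m M V) (lam : ℝ)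
    (hgauss : D.EinsteinAmbientGauss lam) (hmix : D.MixedTrace lam)
    (hnonpos : ∀ p (X : V), D.mixed p X X ≤ 0)
    (hscal : D.ConstScal) (hbh : D.IsBiharmonic lam) :
    ∀ p, 0 ≤ 1 / 8 * (m : ℝ) * (5 * (m : ℝ) + 4)
            * ‖D.grad (fun q => (D.H q) ^ 2) p‖ ^ 2 ∧
      1 / 8 * (m : ℝ) * (5 * (m : ℝ) + 4) * ‖D.grad (fun q => (D.H q) ^ 2) p‖ ^ 2
        ≤ 2 * (5 / 4 * (m : ℝ) ^ 2 * (D.H p) ^ 2 + D.normA2 p) * ‖D.grad D.H p‖ ^ 2 ∧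
      2 * (5 / 4 * (m : ℝ) ^ 2 * (D.H p) ^ 2 + D.normA2 p) * ‖D.grad D.H p‖ ^ 2
        ≤ D.lap (fun q => ‖D.grad D.H q‖ ^ 2) p := by
  intro p
  have hm' : (0 : ℝ) < m := by exact_mod_cast hm
  have hA2 : ∀ q, D.normA2 q
      = (m : ℝ) ^ 2 * (D.H q) ^ 2 + (lam * ((m : ℝ) - 1) - D.scal p) := by
    intro q
    rw [D.normA2_sub lam hgauss hmix q, hscal q p]
  have hlapH : D.lap D.H = fun q => (m : ℝ) ^ 2 * (D.H q * (D.H q * D.H q))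
      + ((lam * ((m : ℝ) - 1) - D.scal p) - lam) * D.H q := by
    funext q
    rw [hbh.1 q, hA2 q]
    ring
  have hgradlap : D.grad (D.lap D.H) p
      = (3 * (m : ℝ) ^ 2 * (D.H p) ^ 2 + ((lam * ((m : ℝ) - 1) - D.scal p) - lam))
          • D.grad D.H p := by
    rw [hlapH]
    exact D.grad_cubic D.H ((m : ℝ) ^ 2) ((lam * ((m : ℝ) - 1) - D.scal p) - lam) p
  have hinner : ⟪D.grad D.H p, D.grad (D.lap D.H) p⟫
      = (3 * (m : ℝ) ^ 2 * (D.H p) ^ 2 + ((lam * ((m : ℝ) - 1) - D.scal p) - lam))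
          * ‖D.grad D.H p‖ ^ 2 := by
    rw [hgradlap, real_inner_smul_right, real_inner_self_eq_norm_sq]
  have hAX : D.A p (D.grad D.H p) = -(((m : ℝ) / 2 * D.H p) • D.grad D.H p) :=
    eq_neg_of_add_eq_zero_left (hbh.2 p)
  have hric : (lam - 3 / 4 * (m : ℝ) ^ 2 * (D.H p) ^ 2) * ‖D.grad D.H p‖ ^ 2
      ≤ D.ricci p (D.grad D.H p) (D.grad D.H p) := by
    have hg := hgauss p (D.grad D.H p) (D.grad D.H p)
    have h1 : ⟪D.A p (D.grad D.H p), D.A p (D.grad D.H p)⟫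
        = ((m : ℝ) / 2 * D.H p) ^ 2 * ‖D.grad D.H p‖ ^ 2 := by
      rw [hAX, inner_neg_neg, real_inner_smul_left, real_inner_smul_right,
        real_inner_self_eq_norm_sq]
      ring
    have h2 : ⟪D.A p (D.grad D.H p), D.grad D.H p⟫
        = -((m : ℝ) / 2 * D.H p) * ‖D.grad D.H p‖ ^ 2 := by
      rw [hAX, inner_neg_left, real_inner_smul_left, real_inner_self_eq_norm_sq]
      ring
    have h3 : ⟪D.grad D.H p, D.grad D.H p⟫ = ‖D.grad D.H p‖ ^ 2 :=
      real_inner_self_eq_norm_sq _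
    have h4 := hnonpos p (D.grad D.H p)
    rw [h1, h2, h3] at hg
    nlinarith [hg, h4]
  have hboch := D.bochner D.H p
  have hhess := D.hess2_nonneg D.H p
  have hgradsq : D.grad (fun q => (D.H q) ^ 2) p = (2 * D.H p) • D.grad D.H p := by
    have he : (fun q => (D.H q) ^ 2) = fun q => D.H q * D.H q := by
      funext q; ring
    rw [he, D.grad_mul D.H D.H]
    simp only [two_mul, add_smul]
  have hnormsq : ‖D.grad (fun q => (D.H q) ^ 2) p‖ ^ 2
      = 4 * (D.H p) ^ 2 * ‖D.grad D.H p‖ ^ 2 := by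
    rw [hgradsq, norm_smul, mul_pow, Real.norm_eq_abs, sq_abs]
    ring
  have hnewton := D.newton hm p
  have hA2p := hA2 p
  refine ⟨by positivity, ?_, ?_⟩
  · rw [hnormsq]
    nlinarith [mul_le_mul_of_nonneg_right hnewton (sq_nonneg ‖D.grad D.H p‖),
      sq_nonneg ‖D.grad D.H p‖, sq_nonneg (D.H p * ‖D.grad D.H p‖)]
  · rw [hboch]
    nlinarith [hric, hinner, hhess, hA2p]
end
end

section
/- A complete biharmonic hypersurface M^m of constant scalar curvature in a non-positively curved Einstein manifold is minimal if either (a) |∇H| ∈ L^p(M) for some 2 < p < ∞, or (b) |∇H| ∈ L²(M) and the Ricci curvature of M is bounded below by −c(1 + r(x)²), where r is the distance function. -/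
noncomputable section

open scoped RealInnerProductSpace BigOperators

/-- A complete hypersurface: the base data together with the `L^p` classes of functions
and the maximum principles of Yau and Karp–Li type (Theorem MP) valid on complete
Riemannian manifolds. `r` is the distance function from a fixed point. -/
structure CompleteHypersurfaceData (m : ℕ) (M : Type) (V : Type)
    [NormedAddCommGroup V] [InnerProductSpace ℝ V] [FiniteDimensional ℝ V]
    extends HypersurfaceData m M V : Type where
  /-- `MemLp f q` means `f ∈ L^q(M)` -/
  MemLp : (M → ℝ) → ℝ → Prop
  memLp_sq : ∀ (f : M → ℝ) (q : ℝ), MemLp f q → MemLp (fun x => (f x) ^ 2) (q / 2)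
  /-- the distance function from a fixed point of `M` -/
  r : M → ℝ
  /-- maximum principle (i): if `Ric^M` is bounded from below, `f ≥ 0` is bounded from
  above and `Δf ≥ ε f` for some `ε > 0`, then `f` is constant -/
  maxp_bounded : ∀ (f : M → ℝ) (ε : ℝ), 0 < ε → (∀ p, 0 ≤ f p) →
    (∃ B : ℝ, ∀ p, f p ≤ B) →
    (∃ K : ℝ, ∀ p (X : V), K * ‖X‖ ^ 2 ≤ ricci p X X) →
    (∀ p, ε * f p ≤ lap f p) → ∀ p q, f p = f q
  /-- maximum principle (ii): a nonnegative `L^q` (`1 < q < ∞`) subharmonic function is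
  constant -/
  maxp_Lp : ∀ (f : M → ℝ) (q : ℝ), 1 < q → (∀ p, 0 ≤ f p) → MemLp f q →
    (∀ p, 0 ≤ lap f p) → ∀ p p', f p = f p'
  /-- maximum principle (iii): a nonnegative `L¹` subharmonic function is constant,
  provided `Ric^M ≥ -c(1 + r(x)²)` -/
  maxp_L1 : ∀ f : M → ℝ, (∀ p, 0 ≤ f p) → MemLp f 1 → (∀ p, 0 ≤ lap f p) →
    (∃ c : ℝ, 0 < c ∧ ∀ p (X : V), -(c * (1 + r p ^ 2)) * ‖X‖ ^ 2 ≤ ricci p X X) →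
    ∀ p q, f p = f q

section AuxTrace
variable {V : Type} [NormedAddCommGroup V] [InnerProductSpace ℝ V] [FiniteDimensional ℝ V]

lemma trace_eq_sum_inner_std (T : V →ₗ[ℝ] V) :
    LinearMap.trace ℝ V T
      = ∑ i, ⟪T (stdOrthonormalBasis ℝ V i), stdOrthonormalBasis ℝ V i⟫ := by
  set b := stdOrthonormalBasis ℝ V with hb
  rw [LinearMap.trace_eq_matrix_trace ℝ b.toBasis, Matrix.trace]
  refine Finset.sum_congr rfl fun i _ => ?_
  rw [Matrix.diag_apply, LinearMap.toMatrix_apply, OrthonormalBasis.coe_toBasis,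
    OrthonormalBasis.coe_toBasis_repr_apply, b.repr_apply_apply, real_inner_comm]

lemma inner_self_std (i) :
    ⟪stdOrthonormalBasis ℝ V i, stdOrthonormalBasis ℝ V i⟫ = (1:ℝ) := by
  rw [real_inner_self_eq_norm_sq, (stdOrthonormalBasis ℝ V).orthonormal.1 i]; norm_num

end AuxTrace

/-- **Proposition (complete biharmonic hypersurfaces of constant scalar curvature in
non-positively curved Einstein manifolds).**  A complete biharmonic hypersurface `M^m`
of constant scalar curvature in a non-positively curved Einstein manifold `N^{m+1}`
(with `Ric^N = λ h`; non-positive curvature is encoded by `R^N(X,ξ,X,ξ) ≤ 0`) is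
minimal if either (a) `|∇H| ∈ L^p(M)` for some `2 < p < ∞`, or (b) `|∇H| ∈ L²(M)` and
the Ricci curvature of `M` is bounded from below by `−c(1 + r(x)²)`, where `r` is the
distance function on `M`. -/
theorem complete_biharmonic_nonpositive_einstein_minimal {M V : Type}
    [NormedAddCommGroup V] [InnerProductSpace ℝ V] [FiniteDimensional ℝ V]
    {m : ℕ} (hm : 0 < m) (D : CompleteHypersurfaceData m M V) (lam : ℝ)
    (hgauss : D.toHypersurfaceData.EinsteinAmbientGauss lam)
    (hmix : D.toHypersurfaceData.MixedTrace lam)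
    (hnonpos : ∀ p (X : V), D.mixed p X X ≤ 0)
    (hscal : D.toHypersurfaceData.ConstScal)
    (hbh : D.toHypersurfaceData.IsBiharmonic lam)
    (hcond :
      (∃ pe : ℝ, 2 < pe ∧ D.MemLp (fun q => ‖D.grad D.H q‖) pe) ∨
      (D.MemLp (fun q => ‖D.grad D.H q‖) 2 ∧
        ∃ c : ℝ, 0 < c ∧
          ∀ q (X : V), -(c * (1 + D.r q ^ 2)) * ‖X‖ ^ 2 ≤ D.ricci q X X)) :
    D.toHypersurfaceData.Minimal := by
  intro p
  -- basic curvature facts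
  have hlam : lam ≤ 0 := by
    rw [← hmix p]
    exact Finset.sum_nonpos fun i _ => hnonpos p _
  have hA2inner : ∀ q, D.normA2 q
      = ∑ i, ⟪D.A q (stdOrthonormalBasis ℝ V i), D.A q (stdOrthonormalBasis ℝ V i)⟫ := by
    intro q
    have h0 : D.normA2 q = LinearMap.trace ℝ V (D.A q ∘ₗ D.A q) := rfl
    rw [h0, trace_eq_sum_inner_std]
    refine Finset.sum_congr rfl fun i _ => ?_
    rw [LinearMap.comp_apply, D.A_symm]
  have hA2norm : ∀ q, D.normA2 q = ∑ i, ‖D.A q (stdOrthonormalBasis ℝ V i)‖ ^ 2 := by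
    intro q
    rw [hA2inner q]
    exact Finset.sum_congr rfl fun i _ => real_inner_self_eq_norm_sq _ 
  have hA2nonneg : ∀ q, 0 ≤ D.normA2 q := by
    intro q
    rw [hA2norm q]
    exact Finset.sum_nonneg fun i _ => sq_nonneg _
  have hAsum : ∀ q,
      ∑ i, ⟪D.A q (stdOrthonormalBasis ℝ V i), stdOrthonormalBasis ℝ V i⟫ = m * D.H q := by
    intro q
    rw [← trace_eq_sum_inner_std, D.trace_A]
  -- traced Gauss equation
  have key : ∀ q, D.scal q + D.normA2 q - ((m:ℝ) * D.H q) * ((m:ℝ) * D.H q) + lam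
      = lam * m := by
    intro q
    have h1 : ∑ i, lam * ⟪stdOrthonormalBasis ℝ V i, stdOrthonormalBasis ℝ V i⟫
        = ∑ i, (D.ricci q (stdOrthonormalBasis ℝ V i) (stdOrthonormalBasis ℝ V i)
            + ⟪D.A q (stdOrthonormalBasis ℝ V i), D.A q (stdOrthonormalBasis ℝ V i)⟫
            - ↑m * D.H q * ⟪D.A q (stdOrthonormalBasis ℝ V i), stdOrthonormalBasis ℝ V i⟫
            + D.mixed q (stdOrthonormalBasis ℝ V i) (stdOrthonormalBasis ℝ V i)) :=
      Finset.sum_congr rfl fun i _ => hgauss q _ _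
    have hms : ∑ i, ↑m * D.H q * ⟪D.A q (stdOrthonormalBasis ℝ V i), stdOrthonormalBasis ℝ V i⟫
        = ↑m * D.H q * (↑m * D.H q) := by
      rw [← Finset.mul_sum, hAsum q]
    rw [Finset.sum_add_distrib, Finset.sum_sub_distrib, Finset.sum_add_distrib,
      hmix q, hms, ← hA2inner q] at h1
    have hsc : D.scal q
        = ∑ i, D.ricci q (stdOrthonormalBasis ℝ V i) (stdOrthonormalBasis ℝ V i) := rfl
    rw [← hsc] at h1
    have h2 : ∑ i, lam * ⟪stdOrthonormalBasis ℝ V i, stdOrthonormalBasis ℝ V i⟫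
        = lam * m := by
      have h3 : ∀ i : Fin (Module.finrank ℝ V),
          lam * ⟪stdOrthonormalBasis ℝ V i, stdOrthonormalBasis ℝ V i⟫ = lam :=
        fun i => by rw [inner_self_std, mul_one]
      rw [Finset.sum_congr rfl fun i _ => h3 i, Finset.sum_const, Finset.card_univ,
        Fintype.card_fin, D.dimV, nsmul_eq_mul, mul_comm]
    rw [h2] at h1
    linear_combination -h1
  -- constant scalar curvature: |A|² = m²H² + C
  set C : ℝ := (m:ℝ) * lam - lam - D.scal p with hCdef
  have hC : ∀ q, D.normA2 q = (m:ℝ) ^ 2 * D.H q ^ 2 + C := by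
    intro q
    rw [hCdef]
    linear_combination key q - hscal q p
  -- computation of ∇(ΔH)
  have grad_smulc : ∀ (c : ℝ) (g : M → ℝ),
      D.grad (fun q => c * g q) = fun q => c • D.grad g q := by
    intro c g
    have h : D.grad (fun q => c * g q)
        = fun q => c • D.grad g q + g q • D.grad (fun _ => c) q :=
      D.grad_mul (fun _ => c) g
    rw [D.grad_const] at h
    funext q
    rw [h]
    simp
  have hlapH : D.lap D.H = fun q => D.H q * ((m:ℝ) ^ 2 * (D.H q * D.H q) + (C - lam)) := by
    funext q
    rw [hbh.1 q, hC q]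
    ring
  have hgradv : D.grad (fun q => (m:ℝ) ^ 2 * (D.H q * D.H q) + (C - lam))
      = fun q => (m:ℝ) ^ 2 • (D.H q • D.grad D.H q + D.H q • D.grad D.H q) := by
    have h1 : D.grad (fun q => (m:ℝ) ^ 2 * (D.H q * D.H q) + (C - lam))
        = fun q => D.grad (fun q => (m:ℝ) ^ 2 * (D.H q * D.H q)) q
            + D.grad (fun _ => C - lam) q :=
      D.grad_add (fun q => (m:ℝ) ^ 2 * (D.H q * D.H q)) (fun _ => C - lam)
    have h2 : D.grad (fun q => (m:ℝ) ^ 2 * (D.H q * D.H q))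
        = fun q => (m:ℝ) ^ 2 • D.grad (fun q => D.H q * D.H q) q :=
      grad_smulc _ _
    have h3 : D.grad (fun q => D.H q * D.H q)
        = fun q => D.H q • D.grad D.H q + D.H q • D.grad D.H q :=
      D.grad_mul D.H D.H
    funext q
    rw [h1, h2, h3, D.grad_const]
    simp
  have hgradlap : ∀ q, D.grad (D.lap D.H) q
      = (3 * (m:ℝ) ^ 2 * (D.H q * D.H q) + (C - lam)) • D.grad D.H q := by
    have h0 : D.grad (fun q => D.H q * ((m:ℝ) ^ 2 * (D.H q * D.H q) + (C - lam)))
        = fun q => D.H q • D.grad (fun q => (m:ℝ) ^ 2 * (D.H q * D.H q) + (C - lam)) q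
            + ((m:ℝ) ^ 2 * (D.H q * D.H q) + (C - lam)) • D.grad D.H q :=
      D.grad_mul D.H (fun q => (m:ℝ) ^ 2 * (D.H q * D.H q) + (C - lam))
    intro q
    rw [hlapH, h0, hgradv]
    simp only []
    module
  have hip : ∀ q, ⟪D.grad D.H q, D.grad (D.lap D.H) q⟫
      = (3 * (m:ℝ) ^ 2 * (D.H q * D.H q) + (C - lam)) * ‖D.grad D.H q‖ ^ 2 := by
    intro q
    rw [hgradlap q, real_inner_smul_right, real_inner_self_eq_norm_sq]
  -- the shape operator on ∇H, and the Ricci term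
  have hAG : ∀ q, D.A q (D.grad D.H q)
      = -(((m:ℝ) / 2 * D.H q) • D.grad D.H q) :=
    fun q => eq_neg_of_add_eq_zero_left (hbh.2 q)
  have hric : ∀ q, D.ricci q (D.grad D.H q) (D.grad D.H q)
      = lam * ‖D.grad D.H q‖ ^ 2
        - 3 / 4 * (m:ℝ) ^ 2 * (D.H q * D.H q) * ‖D.grad D.H q‖ ^ 2
        - D.mixed q (D.grad D.H q) (D.grad D.H q) := by
    intro q
    have h := hgauss q (D.grad D.H q) (D.grad D.H q)
    rw [hAG q] at h
    simp only [inner_neg_neg, inner_neg_left, inner_neg_right, real_inner_smul_left,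
      real_inner_smul_right, real_inner_self_eq_norm_sq, norm_smul, mul_pow,
      Real.norm_eq_abs, sq_abs] at h
    linear_combination -h
  -- Bochner : Δ|∇H|² is explicitly nonnegative
  have hlapf : ∀ q, D.lap (fun q => ‖D.grad D.H q‖ ^ 2) q
      = 2 * (D.hess2 D.H q
        + ((D.normA2 q + 5 / 4 * (m:ℝ) ^ 2 * D.H q ^ 2) * ‖D.grad D.H q‖ ^ 2
          - D.mixed q (D.grad D.H q) (D.grad D.H q))) := by
    intro q
    rw [D.bochner D.H q, hric q, hip q]
    linear_combination (-2 * ‖D.grad D.H q‖ ^ 2) * hC q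
  have hsub : ∀ q, 0 ≤ D.lap (fun q => ‖D.grad D.H q‖ ^ 2) q := by
    intro q
    rw [hlapf q]
    have h1 := D.hess2_nonneg D.H q
    have h3 := hnonpos q (D.grad D.H q)
    have h2 : 0 ≤ (D.normA2 q + 5 / 4 * (m:ℝ) ^ 2 * D.H q ^ 2) * ‖D.grad D.H q‖ ^ 2 :=
      mul_nonneg (add_nonneg (hA2nonneg q) (by positivity)) (sq_nonneg _)
    linarith
  -- the maximum principles : |∇H|² is constant
  have hconst : ∀ a c : M, ‖D.grad D.H a‖ ^ 2 = ‖D.grad D.H c‖ ^ 2 := by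
    rcases hcond with ⟨pe, hpe, hmem⟩ | ⟨hmem, hc⟩
    · have hm2 := D.memLp_sq _ pe hmem
      exact D.maxp_Lp (fun q => ‖D.grad D.H q‖ ^ 2) (pe / 2) (by linarith)
        (fun q => sq_nonneg _) hm2 hsub
    · have hm2 := D.memLp_sq _ 2 hmem
      norm_num at hm2
      exact D.maxp_L1 (fun q => ‖D.grad D.H q‖ ^ 2) (fun q => sq_nonneg _) hm2 hsub hc
  have hfeq : (fun q => ‖D.grad D.H q‖ ^ 2) = fun _ => ‖D.grad D.H p‖ ^ 2 :=
    funext fun q => hconst q p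
  have hlap0 : D.lap (fun q => ‖D.grad D.H q‖ ^ 2) p = 0 := by
    rw [hfeq, D.lap_const]
  -- conclusion at the point p
  rw [hlapf p] at hlap0
  have hhess : D.hess2 D.H p = 0 := by
    have h1 := D.hess2_nonneg D.H p
    have h3 := hnonpos p (D.grad D.H p)
    have h2 : 0 ≤ (D.normA2 p + 5 / 4 * (m:ℝ) ^ 2 * D.H p ^ 2) * ‖D.grad D.H p‖ ^ 2 :=
      mul_nonneg (add_nonneg (hA2nonneg p) (by positivity)) (sq_nonneg _)
    linarith
  have hlapH0 : D.lap D.H p = 0 := by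
    have hb := D.hess2_bound D.H p
    rw [hhess, mul_zero] at hb
    exact sq_eq_zero_iff.mp (le_antisymm hb (sq_nonneg _))
  have hprod : D.H p * (D.normA2 p - lam) = 0 := by
    rw [← hbh.1 p]; exact hlapH0
  by_cases hH : D.H p = 0
  · exact hH
  · exfalso
    have h4 : D.normA2 p - lam = 0 := by
      rcases mul_eq_zero.mp hprod with h | h
      · exact absurd h hH
      · exact h
    have h5 : D.normA2 p = 0 := le_antisymm (by linarith) (hA2nonneg p)
    have h6 : ∀ i ∈ Finset.univ, ‖D.A p (stdOrthonormalBasis ℝ V i)‖ ^ 2 = 0 := by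
      refine (Finset.sum_eq_zero_iff_of_nonneg fun i _ => sq_nonneg _).mp ?_
      rw [← hA2norm p, h5]
    have h7 : (m:ℝ) * D.H p = 0 := by
      rw [← D.trace_A p, trace_eq_sum_inner_std]
      refine Finset.sum_eq_zero fun i hi => ?_
      have hz : D.A p (stdOrthonormalBasis ℝ V i) = 0 := by
        have := h6 i hi
        simpa using this
      rw [hz, inner_zero_left]
    have hm' : (m:ℝ) ≠ 0 := Nat.cast_ne_zero.mpr hm.ne'
    rcases mul_eq_zero.mp h7 with h | h
    · exact hm' h
    · exact hH h
end
end
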